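/- For every integer n ≥ 1, the auxiliary quantities satisfy the product identity r_n(t)² − γ r_n(t) = β_n R_{n−1}(t) R_n(t). -/

import Mathlib

open MeasureTheory Polynomial Set

set_option linter.unusedSectionVars false
set_option linter.unusedVariables false

lemma gauss_poly0 (p : Polynomial ℝ) :
    Integrable fun x : ℝ => p.eval x * Real.exp (-x ^ 2) := by
  induction p using Polynomial.induction_on' with
  | add f g hf hg => simpa [add_mul, Pi.add_def] using hf.add hg
  | monomial k a =>
    have h0 : Integrable fun x : ℝ => x ^ ((k : ℝ)) * Real.exp (-1 * x ^ 2) :=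
      integrable_rpow_mul_exp_neg_mul_sq one_pos (by have : (0:ℝ) ≤ (k:ℝ) := Nat.cast_nonneg k; linarith)
    have h1 : Integrable fun x : ℝ => x ^ k * Real.exp (-x ^ 2) := by
      simpa [Real.rpow_natCast] using h0
    simpa [eval_monomial, mul_assoc] using h1.const_mul a

lemma gauss_poly (t : ℝ) (p : Polynomial ℝ) :
    Integrable fun y : ℝ => p.eval y * Real.exp (-y ^ 2 + t * y) := by
  have h0 := (gauss_poly0 (p.comp (X + C (t / 2)))).comp_sub_right (t / 2)
  have h1 := h0.const_mul (Real.exp (t ^ 2 / 4))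
  refine h1.congr (Filter.Eventually.of_forall fun y => ?_)
  simp only []
  rw [eval_comp]
  simp only [eval_add, eval_X, eval_C, sub_add_cancel]
  rw [mul_comm (Real.exp (t ^ 2 / 4)), mul_assoc, ← Real.exp_add]
  congr 2
  ring

lemma abs_rpow_int (t : ℝ) {s : ℝ} (hs : -1 < s) :
    IntegrableOn (fun y : ℝ => |y - t| ^ s) (Icc (t - 1) (t + 1)) := by
  have h1 : IntervalIntegrable (fun x : ℝ => |x| ^ s) volume 0 1 := by
    refine (intervalIntegral.intervalIntegrable_rpow' (a := 0) (b := 1) hs).congr_ae ?_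
    rw [Filter.EventuallyEq, ae_restrict_iff' measurableSet_uIoc]
    refine Filter.Eventually.of_forall fun x hx => ?_
    rw [Set.uIoc_of_le zero_le_one] at hx
    rw [abs_of_pos hx.1]
  have h2 : IntervalIntegrable (fun x : ℝ => |x| ^ s) volume (-1) 0 := by
    have := (h1.comp_mul_left (c := -1)).symm
    simp only [neg_mul, one_mul, abs_neg] at this
    simpa using this
  have h3 : IntervalIntegrable (fun x : ℝ => |x| ^ s) volume (-1) 1 := h2.trans h1
  have h4 := h3.comp_sub_right t
  have e1 : -1 + t = t - 1 := by ring
  have e2 : 1 + t = t + 1 := by ring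
  rw [e1, e2] at h4
  rwa [intervalIntegrable_iff_integrableOn_Icc_of_le (by linarith)] at h4

lemma main_int (t : ℝ) {s : ℝ} (hs : -1 < s) (p : Polynomial ℝ) :
    Integrable fun y : ℝ => p.eval y * Real.exp (-y ^ 2 + t * y) * |y - t| ^ s := by
  have hmeas : AEStronglyMeasurable
      (fun y : ℝ => p.eval y * Real.exp (-y ^ 2 + t * y) * |y - t| ^ s) volume := by
    have : Measurable fun y : ℝ => p.eval y * Real.exp (-y ^ 2 + t * y) * |y - t| ^ s := by
      have hp : Measurable fun y : ℝ => p.eval y := p.continuous_aeval.measurable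
      fun_prop
    exact this.aestronglyMeasurable
  rw [← integrableOn_univ, ← Set.union_compl_self (Icc (t - 1) (t + 1))]
  apply IntegrableOn.union
  · -- on Icc
    obtain ⟨C, hC⟩ := (isCompact_Icc (a := t - 1) (b := t + 1)).exists_bound_of_continuousOn
      (f := fun y : ℝ => p.eval y * Real.exp (-y ^ 2 + t * y))
      (by fun_prop)
    refine Integrable.mono' ((abs_rpow_int t hs).const_mul C) hmeas.restrict ?_
    rw [ae_restrict_iff' measurableSet_Icc]
    refine Filter.Eventually.of_forall fun y hy => ?_
    have hnn : 0 ≤ |y - t| ^ s := Real.rpow_nonneg (abs_nonneg _) s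
    calc ‖p.eval y * Real.exp (-y ^ 2 + t * y) * |y - t| ^ s‖
        = ‖p.eval y * Real.exp (-y ^ 2 + t * y)‖ * (|y - t| ^ s) := by
          rw [norm_mul, Real.norm_eq_abs (|y - t| ^ s), abs_of_nonneg hnn]
      _ ≤ C * (|y - t| ^ s) := mul_le_mul_of_nonneg_right (hC y hy) hnn
  · -- off Icc
    set m := ⌈s⌉₊ with hm
    set q : Polynomial ℝ := p * (1 + (X - C t) ^ 2) ^ m with hqdef
    have hq : Integrable fun y : ℝ => |q.eval y * Real.exp (-y ^ 2 + t * y)| :=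
      (gauss_poly t q).abs
    refine Integrable.mono' hq.integrableOn hmeas.restrict ?_
    rw [ae_restrict_iff' measurableSet_Icc.compl]
    refine Filter.Eventually.of_forall fun y hy => ?_
    have h1 : (1 : ℝ) ≤ |y - t| := by
      simp only [Set.mem_compl_iff, Set.mem_Icc, not_and_or, not_le] at hy
      rw [le_abs]
      rcases hy with h | h
      · right; linarith
      · left; linarith
    have h2 : |y - t| ^ s ≤ |y - t| ^ (m : ℝ) :=
      Real.rpow_le_rpow_of_exponent_le h1 (Nat.le_ceil s)
    rw [Real.rpow_natCast] at h2
    have h3 : |y - t| ^ m ≤ (1 + (y - t) ^ 2) ^ m := by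
      apply pow_le_pow_left₀ (abs_nonneg _)
      nlinarith [sq_abs (y - t), sq_nonneg (|y - t| - 1)]
    have hqe : q.eval y = p.eval y * (1 + (y - t) ^ 2) ^ m := by
      simp [hqdef]
    have hE : (0 : ℝ) < Real.exp (-y ^ 2 + t * y) := Real.exp_pos _
    have hpow : (0 : ℝ) ≤ (1 + (y - t) ^ 2) ^ m := by positivity
    calc ‖p.eval y * Real.exp (-y ^ 2 + t * y) * |y - t| ^ s‖
        = |p.eval y| * Real.exp (-y ^ 2 + t * y) * |y - t| ^ s := by
          rw [norm_mul, norm_mul, Real.norm_eq_abs, Real.norm_eq_abs, Real.norm_eq_abs,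
            abs_of_pos hE, abs_of_nonneg (Real.rpow_nonneg (abs_nonneg _) s)]
      _ ≤ |p.eval y| * Real.exp (-y ^ 2 + t * y) * (1 + (y - t) ^ 2) ^ m := by
          have := h2.trans h3
          gcongr
      _ = |q.eval y * Real.exp (-y ^ 2 + t * y)| := by
          rw [hqe, abs_mul, abs_mul, abs_of_pos hE, abs_of_nonneg hpow]
          ring

section W
variable {t γ A B : ℝ} {w : ℝ → ℝ}
variable (hγ : 0 < γ) (hA : 0 ≤ A) (hAB : 0 ≤ A + B)
variable (hw : ∀ y : ℝ, w y =
      Real.exp (-y ^ 2 + t * y) * |y - t| ^ γ *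
        (A + B * (if 0 < y - t then (1 : ℝ) else 0)))

include hγ hA hAB hw

lemma w_abs_le (y : ℝ) :
    |w y| ≤ (A + |B|) * (Real.exp (-y ^ 2 + t * y) * |y - t| ^ γ) := by
  rw [hw y, abs_mul, abs_mul, abs_of_pos (Real.exp_pos _),
    abs_of_nonneg (Real.rpow_nonneg (abs_nonneg _) γ)]
  have hfac : |A + B * (if 0 < y - t then (1 : ℝ) else 0)| ≤ A + |B| := by
    split_ifs with hcond
    · rw [mul_one, abs_of_nonneg hAB]
      have := le_abs_self B
      linarith
    · rw [mul_zero, add_zero, abs_of_nonneg hA]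
      have := abs_nonneg B
      linarith
  have h1 : 0 ≤ Real.exp (-y ^ 2 + t * y) * |y - t| ^ γ :=
    mul_nonneg (Real.exp_pos _).le (Real.rpow_nonneg (abs_nonneg _) γ)
  exact (mul_le_mul_of_nonneg_left hfac h1).trans_eq (mul_comm _ _)

lemma w_meas : Measurable w := by
  have hwf : w = fun y : ℝ => Real.exp (-y ^ 2 + t * y) * |y - t| ^ γ *
        (A + B * (if 0 < y - t then (1 : ℝ) else 0)) := funext hw
  rw [hwf]
  have hite : Measurable fun y : ℝ => (if 0 < y - t then (1 : ℝ) else 0) := by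
    apply Measurable.ite _ measurable_const measurable_const
    exact measurableSet_lt measurable_const (measurable_id.sub measurable_const)
  fun_prop

lemma w_zero : w t = 0 := by
  rw [hw t]
  simp [Real.zero_rpow hγ.ne']

lemma int_w (p : Polynomial ℝ) : Integrable fun y : ℝ => p.eval y * w y := by
  have hmeas : Measurable fun y : ℝ => p.eval y * w y := by
    have hp : Measurable fun y : ℝ => p.eval y := p.continuous_aeval.measurable
    exact hp.mul (w_meas hγ hA hAB hw)
  refine Integrable.mono' (((main_int t (show (-1:ℝ) < γ by linarith) p).abs).const_mul (A + |B|))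
    hmeas.aestronglyMeasurable ?_
  refine Filter.Eventually.of_forall fun y => ?_
  rw [norm_mul]
  calc ‖p.eval y‖ * ‖w y‖
      ≤ |p.eval y| * ((A + |B|) * (Real.exp (-y ^ 2 + t * y) * |y - t| ^ γ)) :=
        mul_le_mul_of_nonneg_left (w_abs_le hγ hA hAB hw y) (abs_nonneg _)
    _ = (A + |B|) * |p.eval y * Real.exp (-y ^ 2 + t * y) * |y - t| ^ γ| := by
        rw [abs_mul, abs_mul, abs_of_pos (Real.exp_pos _),
          abs_of_nonneg (Real.rpow_nonneg (abs_nonneg _) γ)]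
        ring

lemma int_w_div (p : Polynomial ℝ) :
    Integrable fun y : ℝ => p.eval y * w y / (y - t) := by
  have hmeas : Measurable fun y : ℝ => p.eval y * w y / (y - t) := by
    have hp : Measurable fun y : ℝ => p.eval y := p.continuous_aeval.measurable
    have hwm := w_meas hγ hA hAB hw
    fun_prop
  refine Integrable.mono'
    (((main_int t (by linarith : (-1:ℝ) < γ - 1) p).abs).const_mul (A + |B|))
    hmeas.aestronglyMeasurable ?_
  refine Filter.Eventually.of_forall fun y => ?_
  have hg0 : 0 ≤ (A + |B|) * |p.eval y * Real.exp (-y ^ 2 + t * y) * |y - t| ^ (γ - 1)| := by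
    have : 0 ≤ A + |B| := by have := abs_nonneg B; linarith
    positivity
  by_cases hy : y = t
  · subst hy
    rw [w_zero hγ hA hAB hw]
    simpa using hg0
  · have hyt : y - t ≠ 0 := sub_ne_zero.mpr hy
    have habs : |y - t| ≠ 0 := abs_ne_zero.mpr hyt
    rw [Real.norm_eq_abs, abs_div, abs_mul]
    have key : |y - t| ^ (γ - 1) = |y - t| ^ γ / |y - t| := by
      rw [Real.rpow_sub_one habs γ]
    calc |p.eval y| * |w y| / |y - t|
        ≤ |p.eval y| * ((A + |B|) * (Real.exp (-y ^ 2 + t * y) * |y - t| ^ γ)) / |y - t| := by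
          gcongr
          exact w_abs_le hγ hA hAB hw y
      _ = (A + |B|) * |p.eval y * Real.exp (-y ^ 2 + t * y) * |y - t| ^ (γ - 1)| := by
          rw [abs_mul, abs_mul, abs_of_pos (Real.exp_pos _),
            abs_of_nonneg (Real.rpow_nonneg (abs_nonneg _) (γ - 1)), key]
          field_simp

lemma orth_ext (P : ℕ → Polynomial ℝ) (hmonic : ∀ n, (P n).Monic)
    (hdeg : ∀ n, (P n).natDegree = n)
    (horth : ∀ m n, m ≠ n → ∫ y : ℝ, (P m).eval y * (P n).eval y * w y = 0) :
    ∀ (k : ℕ) (q : Polynomial ℝ), q.natDegree ≤ k → ∀ m : ℕ, k < m →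
      ∫ y : ℝ, q.eval y * (P m).eval y * w y = 0 := by
  intro k
  induction k with
  | zero =>
    intro q hk m hm
    have hq0 : q = C (q.coeff 0) := eq_C_of_natDegree_le_zero hk
    have hP0 : P 0 = 1 := (hmonic 0).natDegree_eq_zero.mp (hdeg 0)
    have hfun : (fun y : ℝ => q.eval y * (P m).eval y * w y)
        = fun y : ℝ => q.coeff 0 * ((P 0).eval y * (P m).eval y * w y) := by
      funext y
      rw [hq0, hP0]
      simp only [eval_C, eval_one, one_mul, coeff_C_zero]
      ring
    rw [hfun, integral_const_mul, horth 0 m (by omega), mul_zero]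
  | succ k IH =>
    intro q hk m hm
    set c := q.coeff (k + 1) with hc
    set q' := q - C c * P (k + 1) with hq'def
    have hq' : q'.natDegree ≤ k := by
      apply natDegree_le_iff_coeff_eq_zero.mpr
      intro j hj
      rw [hq'def, coeff_sub, coeff_C_mul]
      by_cases hjk : j = k + 1
      · subst hjk
        have hP1 : (P (k + 1)).coeff (k + 1) = 1 := by
          have := (hmonic (k + 1)).coeff_natDegree
          rwa [hdeg] at this
        rw [hP1, mul_one, hc, sub_self]
      · have h1 : q.coeff j = 0 :=
          coeff_eq_zero_of_natDegree_lt (lt_of_le_of_lt hk (by omega))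
        have h2 : (P (k + 1)).coeff j = 0 :=
          coeff_eq_zero_of_natDegree_lt (by rw [hdeg]; omega)
        rw [h1, h2, mul_zero, sub_zero]
    have hfun : (fun y : ℝ => q.eval y * (P m).eval y * w y)
        = fun y : ℝ => q'.eval y * (P m).eval y * w y
            + c * ((P (k + 1)).eval y * (P m).eval y * w y) := by
      funext y
      rw [hq'def]
      simp only [eval_sub, eval_mul, eval_C]
      ring
    have i1 : Integrable fun y : ℝ => q'.eval y * (P m).eval y * w y := by
      simpa [eval_mul, mul_assoc] using int_w hγ hA hAB hw (q' * P m)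
    have i2 : Integrable fun y : ℝ => c * ((P (k + 1)).eval y * (P m).eval y * w y) := by
      have := (int_w hγ hA hAB hw (P (k + 1) * P m)).const_mul c
      simpa [eval_mul, mul_assoc] using this
    rw [hfun, integral_add i1 i2, integral_const_mul,
      IH q' hq' m (by omega), horth (k + 1) m (by omega), mul_zero, add_zero]

lemma split_int (p q g : Polynomial ℝ) (c : ℝ)
    (hpq : ∀ y : ℝ, p.eval y = (y - t) * q.eval y + c) :
    ∫ y : ℝ, p.eval y * g.eval y * w y / (y - t)
      = (∫ y : ℝ, q.eval y * g.eval y * w y)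
        + c * ∫ y : ℝ, g.eval y * w y / (y - t) := by
  have key : ∀ y : ℝ, p.eval y * g.eval y * w y / (y - t)
      = q.eval y * g.eval y * w y + c * (g.eval y * w y / (y - t)) := by
    intro y
    by_cases hy : y = t
    · subst hy
      rw [w_zero hγ hA hAB hw]
      simp
    · have h0 : y - t ≠ 0 := sub_ne_zero.mpr hy
      rw [hpq y]
      field_simp
  have i1 : Integrable fun y : ℝ => q.eval y * g.eval y * w y := by
    simpa [eval_mul, mul_assoc] using int_w hγ hA hAB hw (q * g)
  have i2 : Integrable fun y : ℝ => c * (g.eval y * w y / (y - t)) :=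
    (int_w_div hγ hA hAB hw g).const_mul c
  rw [show (fun y : ℝ => p.eval y * g.eval y * w y / (y - t))
      = fun y : ℝ => q.eval y * g.eval y * w y + c * (g.eval y * w y / (y - t))
    from funext key, integral_add i1 i2, integral_const_mul]

end W

/-- For every n >= 1, r_n(t)^2 - gamma r_n(t) = beta_n R_{n-1}(t) R_n(t). -/
theorem product_identity
    (t γ A B : ℝ) (hγ : 0 < γ) (hA : 0 ≤ A) (hAB : 0 ≤ A + B)
    (hABpos : 0 < A ∨ 0 < A + B)
    (w : ℝ → ℝ)
    (hw : ∀ y : ℝ, w y =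
      Real.exp (-y ^ 2 + t * y) * |y - t| ^ γ *
        (A + B * (if 0 < y - t then (1 : ℝ) else 0)))
    (P : ℕ → Polynomial ℝ)
    (hmonic : ∀ n, (P n).Monic)
    (hdeg : ∀ n, (P n).natDegree = n)
    (horth : ∀ m n, m ≠ n →
      ∫ y : ℝ, (P m).eval y * (P n).eval y * w y = 0)
    (h : ℕ → ℝ)
    (hh : ∀ n, h n = ∫ y : ℝ, ((P n).eval y) ^ 2 * w y)
    (hhpos : ∀ n, 0 < h n)
    (β : ℕ → ℝ)
    (hβ : ∀ n, 1 ≤ n → β n = h n / h (n - 1))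
    (R : ℕ → ℝ)
    (hR : ∀ n, R n = γ / h n * ∫ y : ℝ, ((P n).eval y) ^ 2 * w y / (y - t))
    (r : ℕ → ℝ)
    (hr : ∀ n, 1 ≤ n → r n = γ / h (n - 1) *
      ∫ y : ℝ, (P n).eval y * (P (n - 1)).eval y * w y / (y - t)) :
    ∀ n : ℕ, 1 ≤ n → (r n) ^ 2 - γ * r n = β n * R (n - 1) * R n := by
  intro n hn
  obtain ⟨m, rfl⟩ : ∃ m, n = m + 1 := ⟨n - 1, (Nat.succ_pred_eq_of_pos hn).symm⟩
  -- auxiliary quantities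
  set ε : ℕ → ℝ := fun k => ∫ y : ℝ, (P k).eval y * w y / (y - t) with hε
  set Q : ℕ → Polynomial ℝ := fun k => P k /ₘ (X - C t) with hQ
  have hdiv : ∀ k : ℕ, ∀ y : ℝ, (P k).eval y = (y - t) * (Q k).eval y + (P k).eval t := by
    intro k y
    conv_lhs => rw [← modByMonic_add_div (P k) (X - C t)]
    rw [modByMonic_X_sub_C_eq_C_eval]
    simp only [eval_add, eval_mul, eval_sub, eval_X, eval_C]
    ring
  have hQdeg : ∀ k, (Q k).natDegree = k - 1 := by
    intro k
    rw [hQ]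
    rw [natDegree_divByMonic _ (monic_X_sub_C t), hdeg, natDegree_X_sub_C]
  have orth := orth_ext hγ hA hAB hw P hmonic hdeg horth
  -- (a) : ∫ Q (m+1) * P (m+1) * w = 0
  have ha : ∫ y : ℝ, (Q (m + 1)).eval y * (P (m + 1)).eval y * w y = 0 := by
    apply orth m _ (by rw [hQdeg]; omega) (m + 1) (by omega)
  -- (b) : ∫ Q m * P (m+1) * w = 0
  have hb : ∫ y : ℝ, (Q m).eval y * (P (m + 1)).eval y * w y = 0 := by
    apply orth m _ (by rw [hQdeg]; omega) (m + 1) (by omega)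
  -- (c) : ∫ Q m * P m * w = 0
  have hc : ∫ y : ℝ, (Q m).eval y * (P m).eval y * w y = 0 := by
    rcases Nat.eq_zero_or_pos m with hm0 | hm0
    · subst hm0
      have hQ0 : Q 0 = 0 := by
        rw [hQ]
        refine (divByMonic_eq_zero_iff (monic_X_sub_C t)).mpr ?_
        rw [degree_X_sub_C]
        have : (P 0) = 1 := (hmonic 0).natDegree_eq_zero.mp (hdeg 0)
        rw [this, degree_one]
        norm_num
      simp [hQ0]
    · exact orth (m - 1) _ (le_of_eq (hQdeg m)) m (by omega)
  -- (d) : ∫ Q (m+1) * P m * w = h m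
  have hd : ∫ y : ℝ, (Q (m + 1)).eval y * (P m).eval y * w y = h m := by
    have hdegP : degree (P (m + 1)) = ((m + 1 : ℕ) : WithBot ℕ) := by
      rw [degree_eq_natDegree (hmonic (m + 1)).ne_zero, hdeg]
    have hQmonic : (Q (m + 1)).Monic := by
      rw [Monic.def, hQ]
      rw [leadingCoeff_divByMonic_of_monic (monic_X_sub_C t)
        (by rw [degree_X_sub_C, hdegP]; exact_mod_cast Nat.succ_le_succ (Nat.zero_le m))]
      exact hmonic (m + 1)
    set D : Polynomial ℝ := Q (m + 1) - P m with hD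
    have e2 : degree (P m) = ((m : ℕ) : WithBot ℕ) := by
      rw [degree_eq_natDegree (hmonic m).ne_zero, hdeg]
    have e1 : degree (Q (m + 1)) = degree (P m) := by
      rw [degree_eq_natDegree hQmonic.ne_zero, degree_eq_natDegree (hmonic m).ne_zero,
        hQdeg, hdeg]
      norm_num
    have hdlt : D.degree < ((m : ℕ) : WithBot ℕ) := by
      rw [hD]
      calc (Q (m + 1) - P m).degree < degree (Q (m + 1)) :=
            degree_sub_lt e1 hQmonic.ne_zero
              (by rw [Monic.def.mp hQmonic, Monic.def.mp (hmonic m)])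
        _ = _ := by rw [e1, e2]
    have hzero : ∫ y : ℝ, D.eval y * (P m).eval y * w y = 0 := by
      rcases eq_or_ne D 0 with h0 | h0
      · rw [h0]; simp
      · refine orth D.natDegree D le_rfl m ?_
        exact (natDegree_lt_iff_degree_lt h0).mpr hdlt
    have hfun : (fun y : ℝ => (Q (m + 1)).eval y * (P m).eval y * w y)
        = fun y : ℝ => D.eval y * (P m).eval y * w y + (P m).eval y ^ 2 * w y := by
      funext y
      rw [hD]
      simp only [eval_sub]
      ring
    have i1 : Integrable fun y : ℝ => D.eval y * (P m).eval y * w y := by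
      simpa [eval_mul, mul_assoc] using int_w hγ hA hAB hw (D * P m)
    have i2 : Integrable fun y : ℝ => (P m).eval y ^ 2 * w y := by
      rw [show (fun y : ℝ => (P m).eval y ^ 2 * w y)
          = fun y : ℝ => (P m).eval y * (P m).eval y * w y from funext fun y => by ring]
      simpa [eval_mul, mul_assoc] using int_w hγ hA hAB hw (P m * P m)
    rw [hfun, integral_add i1 i2, hzero, zero_add, ← hh m]
  -- E-equations
  have E3 : R (m + 1) = γ / h (m + 1) * ((P (m + 1)).eval t * ε (m + 1)) := by
    rw [hR (m + 1)]
    rw [show (fun y : ℝ => (P (m + 1)).eval y ^ 2 * w y / (y - t))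
        = fun y : ℝ => (P (m + 1)).eval y * (P (m + 1)).eval y * w y / (y - t) from
      funext fun y => by ring]
    rw [split_int hγ hA hAB hw (P (m + 1)) (Q (m + 1)) (P (m + 1)) ((P (m + 1)).eval t)
      (hdiv (m + 1)), ha, zero_add]
  have E4 : R m = γ / h m * ((P m).eval t * ε m) := by
    rw [hR m]
    rw [show (fun y : ℝ => (P m).eval y ^ 2 * w y / (y - t))
        = fun y : ℝ => (P m).eval y * (P m).eval y * w y / (y - t) from
      funext fun y => by ring]
    rw [split_int hγ hA hAB hw (P m) (Q m) (P m) ((P m).eval t) (hdiv m), hc, zero_add]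
  have E1 : r (m + 1) = γ / h m * ((P m).eval t * ε (m + 1)) := by
    rw [hr (m + 1) (by omega)]
    simp only [Nat.add_sub_cancel]
    rw [show (fun y : ℝ => (P (m + 1)).eval y * (P m).eval y * w y / (y - t))
        = fun y : ℝ => (P m).eval y * (P (m + 1)).eval y * w y / (y - t) from
      funext fun y => by ring]
    rw [split_int hγ hA hAB hw (P m) (Q m) (P (m + 1)) ((P m).eval t) (hdiv m), hb, zero_add]
  have E2 : r (m + 1) = γ / h m * (h m + (P (m + 1)).eval t * ε m) := by
    rw [hr (m + 1) (by omega)]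
    simp only [Nat.add_sub_cancel]
    rw [split_int hγ hA hAB hw (P (m + 1)) (Q (m + 1)) (P m) ((P (m + 1)).eval t)
      (hdiv (m + 1)), hd]
  have hHm := (hhpos m).ne'
  have hHn := (hhpos (m + 1)).ne'
  calc r (m + 1) ^ 2 - γ * r (m + 1)
      = (γ / h m * ((P m).eval t * ε (m + 1)))
          * ((γ / h m * (h m + (P (m + 1)).eval t * ε m)) - γ) := by
        rw [← E1, ← E2]; ring
    _ = (h (m + 1) / h m) * (γ / h m * ((P m).eval t * ε m))
          * (γ / h (m + 1) * ((P (m + 1)).eval t * ε (m + 1))) := by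
        field_simp
        ring
    _ = β (m + 1) * R m * R (m + 1) := by
        rw [hβ (m + 1) (by omega)]
        simp only [Nat.add_sub_cancel]
        rw [E4, E3]
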